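/- (Error representation for the weak (variational) dual problem.) Let V and V̂ be real Banach spaces, let a : V → (V̂ → ℝ) assign to each z ∈ V a continuous linear functional a(z; ·) on V̂, with z ↦ a(z; ·) continuously differentiable (of class C¹) as a map into the continuous dual of V̂, let L be a continuous linear functional on V̂, and let M : V → ℝ be continuously differentiable. Let u, U ∈ V and suppose u solves the variational problem a(u; v) = L(v) for all v ∈ V̂. Suppose φ ∈ V̂ solves the weak dual problem: for every w ∈ V, ∫₀¹ a'(s U + (1−s) u; φ, w) ds = ∫₀¹ M'(s U + (1−s) u)(w) ds, where a'(z; v, w) denotes the Fréchet derivative of z ↦ a(z; v) at z in the direction w. Then M(U) − M(u) = a(U; φ) − L(φ). -/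

import Mathlib

lemma ftc_line {V : Type*} [NormedAddCommGroup V] [NormedSpace ℝ V]
    (f : V → ℝ) (hf : ContDiff ℝ 1 f) (u U : V) :
    f U - f u = ∫ s in (0:ℝ)..1, fderiv ℝ f (s • U + (1 - s) • u) (U - u) := by
  set γ : ℝ → V := fun s => s • U + (1 - s) • u with hγ
  have hγd : ∀ s : ℝ, HasDerivAt γ (U - u) s := by
    intro s
    have : HasDerivAt (fun s : ℝ => s • U + (1 - s) • u) ((1:ℝ) • U + (-1:ℝ) • u) s := by
      exact ((hasDerivAt_id s).smul_const U).add
        (((hasDerivAt_id s).const_sub 1 |>.smul_const u))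
    simpa [γ, one_smul, neg_smul, sub_eq_add_neg] using this
  have hderiv : ∀ s ∈ Set.uIcc (0:ℝ) 1,
      HasDerivAt (fun s => f (γ s)) (fderiv ℝ f (γ s) (U - u)) s := by
    intro s _
    exact ((hf.differentiable one_ne_zero (γ s)).hasFDerivAt).comp_hasDerivAt s (hγd s)
  have hcont : Continuous fun s => fderiv ℝ f (γ s) (U - u) := by
    have h1 : Continuous (fderiv ℝ f) := (contDiff_one_iff_fderiv.mp hf).2
    exact (h1.comp (by fun_prop)).clm_apply continuous_const
  have := intervalIntegral.integral_eq_sub_of_hasDerivAt hderiv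
    (hcont.intervalIntegrable 0 1)
  simpa [γ] using this.symm

/-- Error representation for the weak (variational) dual problem: if `u` solves
`a(u; v) = L(v)` for all `v ∈ V̂` and `φ ∈ V̂` solves the weak dual problem
`∫₀¹ a'(sU + (1−s)u; φ, w) ds = ∫₀¹ M'(sU + (1−s)u)(w) ds` for every `w ∈ V`, then
`M(U) − M(u) = a(U; φ) − L(φ)`. -/
theorem stmt19 {V Vhat : Type*}
    [NormedAddCommGroup V] [NormedSpace ℝ V] [CompleteSpace V]
    [NormedAddCommGroup Vhat] [NormedSpace ℝ Vhat] [CompleteSpace Vhat]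
    (a : V → (Vhat →L[ℝ] ℝ)) (ha : ContDiff ℝ 1 a)
    (L : Vhat →L[ℝ] ℝ) (M : V → ℝ) (hM : ContDiff ℝ 1 M)
    (u U : V) (hu : ∀ v, a u v = L v)
    (φ : Vhat)
    (hφ : ∀ w : V,
      (∫ s in (0:ℝ)..1, fderiv ℝ (fun z => a z φ) (s • U + (1 - s) • u) w)
        = ∫ s in (0:ℝ)..1, fderiv ℝ M (s • U + (1 - s) • u) w) :
    M U - M u = a U φ - L φ := by
  have hA : ContDiff ℝ 1 (fun z => a z φ) := ha.clm_apply contDiff_const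
  have e1 := ftc_line M hM u U
  have e2 := ftc_line (fun z => a z φ) hA u U
  rw [hφ (U - u)] at e2
  have := hu φ
  linarith [e1, e2]
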